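/- arXiv:2503.05181 — 3 statements merged into one kernel-verified Lean document; each statement's English description precedes it below -/
import Mathlib

section
/- For constants b > a > 0, the scalar D-gap function δ^{ab}(λ, η) = ((b-a)/(2ab))·η² - (1/(2a))·(max(0, η - aλ))² + (1/(2b))·(max(0, η - bλ))² is nonnegative for all real λ, η. -/
noncomputable def deltaGap (a b l e : ℝ) : ℝ :=
  ((b - a) / (2 * a * b)) * e ^ 2 - (1 / (2 * a)) * (max 0 (e - a * l)) ^ 2
    + (1 / (2 * b)) * (max 0 (e - b * l)) ^ 2

theorem deltaGap_nonneg (a b : ℝ) (ha : 0 < a) (hab : a < b) :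
    ∀ l e : ℝ, 0 ≤ deltaGap a b l e := by
  intro l e
  have hb : 0 < b := ha.trans hab
  unfold deltaGap
  have ha' := ha.ne'
  have hb' := hb.ne'
  rcases le_or_gt (e - a * l) 0 with h1 | h1 <;>
  rcases le_or_gt (e - b * l) 0 with h2 | h2
  · rw [max_eq_left h1, max_eq_left h2]
    have : ((b - a) / (2 * a * b)) * e ^ 2 - (1 / (2 * a)) * (0:ℝ) ^ 2 + (1 / (2 * b)) * (0:ℝ) ^ 2
        = ((b - a) * e ^ 2) / (2 * a * b) := by field_simp; ring
    rw [this]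
    apply div_nonneg (by nlinarith [sq_nonneg e]) (by positivity)
  · rw [max_eq_left h1, max_eq_right h2.le]
    have : ((b - a) / (2 * a * b)) * e ^ 2 - (1 / (2 * a)) * (0:ℝ) ^ 2 + (1 / (2 * b)) * (e - b * l) ^ 2
        = ((b - a) * e ^ 2 + a * (e - b * l) ^ 2) / (2 * a * b) := by field_simp; ring
    rw [this]
    apply div_nonneg (by nlinarith [sq_nonneg e, sq_nonneg (e - b*l)]) (by positivity)
  · rw [max_eq_right h1.le, max_eq_left h2]
    have hl : 0 < l := by nlinarith
    have hblp : 0 < (b - a) * l := mul_pos (sub_pos.mpr hab) hl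
    have h3 : (e - b * l) ^ 2 ≤ ((b - a) * l) ^ 2 := by
      nlinarith [mul_nonneg (show (0:ℝ) ≤ (b - a) * l + (e - b * l) by nlinarith)
        (show (0:ℝ) ≤ (b - a) * l - (e - b * l) by linarith)]
    have key : 0 ≤ (b - a) * e ^ 2 - b * (e - a * l) ^ 2 := by
      nlinarith [mul_nonneg ha.le (sub_nonneg.mpr h3),
        mul_nonneg (mul_nonneg (mul_pos ha ha).le (sub_pos.mpr hab).le) (sq_nonneg l)]
    have : ((b - a) / (2 * a * b)) * e ^ 2 - (1 / (2 * a)) * (e - a * l) ^ 2 + (1 / (2 * b)) * 0 ^ 2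
        = ((b - a) * e ^ 2 - b * (e - a * l) ^ 2) / (2 * a * b) := by field_simp; ring
    rw [this]
    exact div_nonneg key (by positivity)
  · rw [max_eq_right h1.le, max_eq_right h2.le]
    have key : 0 ≤ (b - a) * e ^ 2 - b * (e - a * l) ^ 2 + a * (e - b * l) ^ 2 := by nlinarith [mul_nonneg (mul_nonneg (mul_pos ha hb).le (sub_pos.mpr hab).le) (sq_nonneg l)]
    have : ((b - a) / (2 * a * b)) * e ^ 2 - (1 / (2 * a)) * (e - a * l) ^ 2 + (1 / (2 * b)) * (e - b * l) ^ 2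
        = ((b - a) * e ^ 2 - b * (e - a * l) ^ 2 + a * (e - b * l) ^ 2) / (2 * a * b) := by field_simp
    rw [this]
    exact div_nonneg key (by positivity)
end

section
/- For constants b > a > 0, the scalar D-gap function δ^{ab}(λ, η) equals zero if and only if λ ≥ 0, η ≥ 0, and λ·η = 0. -/
theorem deltaGap_eq_zero_iff (a b : ℝ) (ha : 0 < a) (hab : a < b) (l e : ℝ) :
    deltaGap a b l e = 0 ↔ 0 ≤ l ∧ 0 ≤ e ∧ l * e = 0 := by
  have hb : 0 < b := lt_trans ha hab
  unfold deltaGap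
  rcases le_or_gt e (a * l) with h1 | h1 <;> rcases le_or_gt e (b * l) with h2 | h2
  · -- both maxes 0
    rw [max_eq_left (by linarith), max_eq_left (by linarith)]
    constructor
    · intro h
      have hcoef : 0 < (b - a) / (2 * a * b) := div_pos (by linarith) (by positivity)
      have he : e = 0 := by
        have he2 : e ^ 2 = 0 := by nlinarith [sq_nonneg e]
        exact pow_eq_zero_iff (by norm_num) |>.mp he2
      subst he
      have hl : 0 ≤ l := by nlinarith
      exact ⟨hl, le_refl 0, by ring⟩
    · rintro ⟨hl, he, hle⟩
      have he0 : e = 0 := by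
        rcases mul_eq_zero.mp hle with h | h
        · subst h; linarith
        · exact h
      subst he0; ring
  · -- a*l ≥ e > b*l : impossible unless l < 0, then δ > 0
    rw [max_eq_left (by linarith), max_eq_right (by linarith)]
    have hl : l < 0 := by nlinarith
    have hpos : 0 < (b - a) / (2 * a * b) * e ^ 2 - 1 / (2 * a) * 0 ^ 2
        + 1 / (2 * b) * (e - b * l) ^ 2 := by
      have t1 : 0 ≤ (b - a) / (2 * a * b) * e ^ 2 :=
        mul_nonneg (le_of_lt (div_pos (by linarith) (by positivity))) (sq_nonneg e)
      have t2 : 0 < 1 / (2 * b) * (e - b * l) ^ 2 := by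
        have h0 : 0 < e - b * l := by linarith
        exact mul_pos (by positivity : (0:ℝ) < 1 / (2 * b)) (pow_pos h0 2)
      nlinarith
    constructor
    · intro h; linarith
    · rintro ⟨hl0, -, -⟩; linarith
  · -- a*l < e ≤ b*l : l > 0, e > 0, δ > 0
    rw [max_eq_right (by linarith), max_eq_left (by linarith)]
    have hl : 0 < l := by nlinarith
    have he : 0 < e := by nlinarith
    have key : (b - a) / (2 * a * b) * e ^ 2 - 1 / (2 * a) * (e - a * l) ^ 2
        + 1 / (2 * b) * 0 ^ 2 = (2 * b * l * e - a * b * l ^ 2 - e ^ 2) / (2 * b) := by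
      field_simp
      ring
    rw [key]
    have hnum : 0 < 2 * b * l * e - a * b * l ^ 2 - e ^ 2 := by
      nlinarith [mul_nonneg (le_of_lt (by linarith : (0:ℝ) < e - a * l))
        (by linarith : (0:ℝ) ≤ b * l - e), mul_pos (mul_pos (by linarith : (0:ℝ) < b - a) hl) he]
    have hpos : 0 < (2 * b * l * e - a * b * l ^ 2 - e ^ 2) / (2 * b) :=
      div_pos hnum (by linarith)
    constructor
    · intro h; linarith
    · rintro ⟨-, -, hle⟩; nlinarith
  · -- both maxes equal arguments: δ = (b-a)/2 * l^2
    rw [max_eq_right (by linarith), max_eq_right (by linarith)]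
    have key : (b - a) / (2 * a * b) * e ^ 2 - 1 / (2 * a) * (e - a * l) ^ 2
        + 1 / (2 * b) * (e - b * l) ^ 2 = (b - a) / 2 * l ^ 2 := by
      field_simp
      ring
    rw [key]
    constructor
    · intro h
      have hl2 : l ^ 2 = 0 := by nlinarith [sq_nonneg l]
      have hl : l = 0 := pow_eq_zero_iff (by norm_num) |>.mp hl2
      subst hl
      refine ⟨le_refl 0, ?_, by ring⟩
      nlinarith
    · rintro ⟨hl, he, hle⟩
      have hl0 : l = 0 := by
        rcases mul_eq_zero.mp hle with h | h
        · exact h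
        · subst h; nlinarith
      subst hl0; ring
end

section
/- For the scalar D-gap function with 0 < a < b, the product of its partial derivatives is nonnegative at every point: ∂δ^{ab}/∂λ(λ, η) · ∂δ^{ab}/∂η(λ, η) ≥ 0 for all λ, η ∈ ℝ. -/
lemma sqMax_hasDerivAt (x : ℝ) :
    HasDerivAt (fun y : ℝ => max 0 y ^ 2) (2 * max 0 x) x := by
  rcases lt_trichotomy x 0 with h | h | h
  · have hx : max 0 x = 0 := max_eq_left h.le
    rw [hx, mul_zero]
    have : (fun y : ℝ => max 0 y ^ 2) =ᶠ[nhds x] fun _ => (0 : ℝ) := by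
      filter_upwards [eventually_lt_nhds h] with y hy
      rw [max_eq_left hy.le]; ring
    exact (hasDerivAt_const x (0 : ℝ)).congr_of_eventuallyEq this
  · subst h
    have hx : max 0 (0:ℝ) = 0 := max_self 0
    rw [hx, mul_zero]
    rw [hasDerivAt_iff_isLittleO]
    simp only [hx, sub_zero, smul_zero, zero_pow, ne_eq, OfNat.ofNat_ne_zero,
      not_false_eq_true, sub_zero]
    rw [Asymptotics.isLittleO_iff]
    intro c hc
    filter_upwards [Metric.eventually_nhds_iff.mpr ⟨c, hc, fun {y} hy => hy⟩] with y hy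
    have h1 : |max 0 y| ≤ |y| := by
      rcases le_or_gt y 0 with h' | h'
      · rw [max_eq_left h']; simp [abs_nonneg]
      · rw [max_eq_right h'.le]
    calc ‖max 0 y ^ 2‖ = |max 0 y| * |max 0 y| := by
          rw [sq]; simp [Real.norm_eq_abs, abs_mul]
      _ ≤ |y| * |y| := mul_le_mul h1 h1 (abs_nonneg _) (abs_nonneg _)
      _ ≤ c * ‖y‖ := by
          have : |y| < c := by simpa [Real.dist_eq] using hy
          exact mul_le_mul this.le le_rfl (abs_nonneg _) hc.le
  · have hx : max 0 x = x := max_eq_right h.le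
    rw [hx]
    have : (fun y : ℝ => y ^ 2) =ᶠ[nhds x] fun y => max 0 y ^ 2 := by
      filter_upwards [eventually_gt_nhds h] with y hy
      rw [max_eq_right hy.le]
    have h2 : HasDerivAt (fun y : ℝ => y ^ 2) (2 * x) x := by
      simpa using (hasDerivAt_pow 2 x)
    exact h2.congr_of_eventuallyEq this.symm

theorem deltaGap_partialDeriv_prod_nonneg (a b : ℝ) (ha : 0 < a) (hab : a < b) :
    ∀ l e : ℝ,
      0 ≤ deriv (fun x => deltaGap a b x e) l * deriv (fun y => deltaGap a b l y) e := by
  have hb : 0 < b := ha.trans hab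
  have ha' : a ≠ 0 := ha.ne'
  have hb' : b ≠ 0 := hb.ne'
  intro l e
  set p := max 0 (e - a * l) with hp
  set q := max 0 (e - b * l) with hq
  -- derivative in l
  have dA : HasDerivAt (fun x => deltaGap a b x e) (p - q) l := by
    have h1 : HasDerivAt (fun x : ℝ => e - a * x) (-a) l := by
      simpa using ((hasDerivAt_id l).const_mul a).const_sub e
    have h2 : HasDerivAt (fun x : ℝ => max 0 (e - a * x) ^ 2) (2 * p * (-a)) l :=
      by have := (sqMax_hasDerivAt (e - a * l)).comp l h1; exact this
    have h3 : HasDerivAt (fun x : ℝ => e - b * x) (-b) l := by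
      simpa using ((hasDerivAt_id l).const_mul b).const_sub e
    have h4 : HasDerivAt (fun x : ℝ => max 0 (e - b * x) ^ 2) (2 * q * (-b)) l :=
      by have := (sqMax_hasDerivAt (e - b * l)).comp l h3; exact this
    have h5 : HasDerivAt (fun x => deltaGap a b x e)
        (0 - (1 / (2 * a)) * (2 * p * (-a)) + (1 / (2 * b)) * (2 * q * (-b))) l := by
      exact ((hasDerivAt_const l (((b - a) / (2 * a * b)) * e ^ 2)).sub
        (h2.const_mul (1 / (2 * a)))).add (h4.const_mul (1 / (2 * b)))
    convert h5 using 1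
    field_simp
    ring
  -- derivative in e
  have dB : HasDerivAt (fun y => deltaGap a b l y)
      ((b - a) / (a * b) * e - p / a + q / b) e := by
    have h1 : HasDerivAt (fun y : ℝ => y - a * l) 1 e := by
      simpa using (hasDerivAt_id e).sub_const (a * l)
    have h2 : HasDerivAt (fun y : ℝ => max 0 (y - a * l) ^ 2) (2 * p * 1) e :=
      by have := (sqMax_hasDerivAt (e - a * l)).comp e h1; exact this
    have h3 : HasDerivAt (fun y : ℝ => y - b * l) 1 e := by
      simpa using (hasDerivAt_id e).sub_const (b * l)
    have h4 : HasDerivAt (fun y : ℝ => max 0 (y - b * l) ^ 2) (2 * q * 1) e :=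
      by have := (sqMax_hasDerivAt (e - b * l)).comp e h3; exact this
    have h0 : HasDerivAt (fun y : ℝ => ((b - a) / (2 * a * b)) * y ^ 2)
        ((b - a) / (2 * a * b) * (2 * e)) e := by
      have := (hasDerivAt_pow 2 e).const_mul ((b - a) / (2 * a * b))
      simpa [mul_comm] using this
    have h5 : HasDerivAt (fun y => deltaGap a b l y)
        ((b - a) / (2 * a * b) * (2 * e) - (1 / (2 * a)) * (2 * p * 1)
          + (1 / (2 * b)) * (2 * q * 1)) e := by
      exact (h0.sub (h2.const_mul (1 / (2 * a)))).add (h4.const_mul (1 / (2 * b)))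
    convert h5 using 1
    field_simp
  rw [dA.deriv, dB.deriv]
  -- case analysis
  rcases le_or_gt (e - a * l) 0 with h1 | h1 <;> rcases le_or_gt (e - b * l) 0 with h2 | h2
  · rw [hp, hq, max_eq_left h1, max_eq_left h2]
    simp
  · -- e ≤ a l, e > b l : first factor ≤ 0, second ≤ 0
    rw [hp, hq, max_eq_left h1, max_eq_right h2.le]
    have k1 : (0 : ℝ) - (e - b * l) ≤ 0 := by linarith
    have k2 : (b - a) / (a * b) * e - 0 / a + (e - b * l) / b ≤ 0 := by
      have : (b - a) / (a * b) * e - 0 / a + (e - b * l) / b = e / a - l := by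
        field_simp; ring
      rw [this, sub_nonpos, div_le_iff₀ ha]
      nlinarith
    nlinarith [k1, k2]
  · -- e > a l, e ≤ b l : first ≥ 0, second ≥ 0
    rw [hp, hq, max_eq_right h1.le, max_eq_left h2]
    have k1 : (0:ℝ) ≤ (e - a * l) - 0 := by linarith
    have k2 : (0:ℝ) ≤ (b - a) / (a * b) * e - (e - a * l) / a + 0 / b := by
      have : (b - a) / (a * b) * e - (e - a * l) / a + 0 / b = l - e / b := by
        field_simp; ring
      rw [this]
      rw [sub_nonneg, div_le_iff₀ hb]
      nlinarith
    exact mul_nonneg k1 k2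
  · -- both positive : second factor is 0
    rw [hp, hq, max_eq_right h1.le, max_eq_right h2.le]
    have : (b - a) / (a * b) * e - (e - a * l) / a + (e - b * l) / b = 0 := by
      field_simp; ring
    rw [this, mul_zero]
end
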